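/- Let N, M ≥ 1 be integers, let ι: ℤ/N × ℤ/N → ℤ/(NM) × ℤ/(NM) be the injective group homomorphism (a, b) ↦ (M·a, M·b), and let k ∈ {0, …, N−1}. Then there exists a 2-cocycle ω̂: (ℤ/(NM) × ℤ/(NM))² → ℂˣ (i.e. ω̂(y, z) · ω̂(x·y, z)⁻¹ · ω̂(x, y·z) · ω̂(x, y)⁻¹ = 1 for all x, y, z) whose pullback along ι equals ω_k^{(N)} if and only if there exists an integer k′ with k′M ≡ k (mod N). -/

import Mathlib

/-- The 2-cochain `ω_k^{(K)}((a₁, b₁), (a₂, b₂)) = exp(2πi k ā₁ b̄₂ / K)` on `ℤ/K × ℤ/K` with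
values in nonzero complex numbers. -/
noncomputable def omegaK (K : ℕ) (k : ℤ) :
    ZMod K × ZMod K → ZMod K × ZMod K → ℂ :=
  fun x y =>
    Complex.exp (2 * (Real.pi : ℂ) * Complex.I * (k : ℂ) * (x.1.val : ℂ) * (y.2.val : ℂ) / (K : ℂ))

/-- The injective group homomorphism `ι : ℤ/N × ℤ/N → ℤ/(NM) × ℤ/(NM)`, `(a, b) ↦ (M·a, M·b)`. -/
def iotaPair (N M : ℕ) : ZMod N × ZMod N → ZMod (N * M) × ZMod (N * M) :=
  fun p => (((M * p.1.val : ℕ) : ZMod (N * M)), ((M * p.2.val : ℕ) : ZMod (N * M)))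

lemma val_add_cast (K : ℕ) [NeZero K] (a b : ZMod K) :
    ((a + b).val : ℂ) = (a.val : ℂ) + b.val - K * (((a.val + b.val) / K : ℕ) : ℂ) := by
  have h := Nat.mod_add_div (a.val + b.val) K
  have : (a + b).val = (a.val + b.val) % K := ZMod.val_add a b
  rw [this]
  have := congrArg (fun n : ℕ => (n : ℂ)) h
  push_cast at this ⊢
  linear_combination this

lemma omegaK_ne (K : ℕ) (k : ℤ) (x y : ZMod K × ZMod K) : omegaK K k x y ≠ 0 :=
  Complex.exp_ne_zero _

lemma omegaK_cocycle (K : ℕ) [NeZero K] (k : ℤ) (x y z : ZMod K × ZMod K) :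
    omegaK K k y z * (omegaK K k (x + y) z)⁻¹ * omegaK K k x (y + z) * (omegaK K k x y)⁻¹ = 1 := by
  have hK : (K : ℂ) ≠ 0 := Nat.cast_ne_zero.2 (NeZero.ne K)
  unfold omegaK
  rw [← Complex.exp_neg, ← Complex.exp_neg, ← Complex.exp_add, ← Complex.exp_add,
    ← Complex.exp_add]
  set q1 : ℕ := (x.1.val + y.1.val) / K with hq1
  set q2 : ℕ := (y.2.val + z.2.val) / K with hq2
  have h1 : (((x + y).1).val : ℂ) = (x.1.val : ℂ) + y.1.val - K * (q1 : ℂ) := val_add_cast K x.1 y.1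
  have h2 : (((y + z).2).val : ℂ) = (y.2.val : ℂ) + z.2.val - K * (q2 : ℂ) := val_add_cast K y.2 z.2
  have key : 2 * (Real.pi : ℂ) * Complex.I * (k : ℂ) * (y.1.val : ℂ) * (z.2.val : ℂ) / K +
      -(2 * (Real.pi : ℂ) * Complex.I * (k : ℂ) * (((x + y).1.val : ℕ) : ℂ) * (z.2.val : ℂ) / K) +
      2 * (Real.pi : ℂ) * Complex.I * (k : ℂ) * (x.1.val : ℂ) * (((y + z).2.val : ℕ) : ℂ) / K +
      -(2 * (Real.pi : ℂ) * Complex.I * (k : ℂ) * (x.1.val : ℂ) * (y.2.val : ℂ) / K) =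
      ((k * ((q1 : ℤ) * (z.2.val : ℤ) - (q2 : ℤ) * (x.1.val : ℤ)) : ℤ) : ℂ) * (2 * (Real.pi : ℂ) * Complex.I) := by
    rw [h1, h2]
    push_cast
    field_simp
    ring
  rw [key, Complex.exp_int_mul_two_pi_mul_I]


lemma iota_val (N M : ℕ) [NeZero N] [NeZero M] (a : ZMod N) :
    (((M * a.val : ℕ) : ZMod (N * M))).val = M * a.val := by
  apply ZMod.val_cast_of_lt
  calc M * a.val < M * N := by
        exact (Nat.mul_lt_mul_left (Nat.pos_of_ne_zero (NeZero.ne M))).2 a.val_lt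
    _ = N * M := Nat.mul_comm M N

lemma omegaK_pullback (N M : ℕ) [NeZero N] [NeZero M] (k k' j : ℤ)
    (hj : k' * (M : ℤ) = k + N * j) (x y : ZMod N × ZMod N) :
    omegaK (N * M) k' (iotaPair N M x) (iotaPair N M y) = omegaK N k x y := by
  have hN : (N : ℂ) ≠ 0 := Nat.cast_ne_zero.2 (NeZero.ne N)
  have hM : (M : ℂ) ≠ 0 := Nat.cast_ne_zero.2 (NeZero.ne M)
  unfold omegaK iotaPair
  simp only [iota_val N M]
  have hjc : (k' : ℂ) * M = k + N * j := by exact_mod_cast hj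
  have key : 2 * (Real.pi : ℂ) * Complex.I * (k' : ℂ) * ((M * x.1.val : ℕ) : ℂ) * ((M * y.2.val : ℕ) : ℂ) / ((N * M : ℕ) : ℂ) =
      2 * (Real.pi : ℂ) * Complex.I * (k : ℂ) * (x.1.val : ℂ) * (y.2.val : ℂ) / (N : ℂ) +
      ((j * x.1.val * y.2.val : ℤ) : ℂ) * (2 * (Real.pi : ℂ) * Complex.I) := by
    push_cast
    field_simp
    linear_combination ((x.1.val : ℂ) * (y.2.val : ℂ)) * hjc
  rw [key, Complex.exp_add, Complex.exp_int_mul_two_pi_mul_I, mul_one]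

section Bichar
variable {G : Type*} [AddCommGroup G] (ω : G → G → ℂ)
  (hc : ∀ x y z : G, ω y z * (ω (x + y) z)⁻¹ * ω x (y + z) * (ω x y)⁻¹ = 1)

include hc

lemma coc_ne : ∀ x y : G, ω x y ≠ 0 := by
  intro x y h0
  have h := hc x y 0
  rw [h0] at h
  simp at h

lemma coc_mul : ∀ x y z : G, ω (x + y) z * ω x y = ω y z * ω x (y + z) := by
  intro x y z
  have h := hc x y z
  have h1 := coc_ne ω hc (x + y) z
  have h2 := coc_ne ω hc x y
  field_simp at h
  linear_combination -h

noncomputable def bichar (a b : G) : ℂ := ω a b * (ω b a)⁻¹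

lemma bichar_add (a a' b : G) :
    bichar ω (a + a') b = bichar ω a b * bichar ω a' b := by
  have h1 := coc_mul ω hc a a' b
  have h2 := coc_mul ω hc b a a'
  have h3 := coc_mul ω hc a b a'
  rw [add_comm b a] at h2
  rw [add_comm b a'] at h3
  unfold bichar
  have hP := coc_ne ω hc a a'
  have n1 := coc_ne ω hc b (a + a')
  have n2 := coc_ne ω hc b a
  have n3 := coc_ne ω hc b a'
  field_simp
  apply mul_left_cancel₀ hP
  linear_combination (ω b a' * ω b a) * h1 + (ω a b * ω a' b) * h2 - (ω a' b * ω b a) * h3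

lemma bichar_zero (b : G) : bichar ω 0 b = 1 := by
  have h1 := coc_mul ω hc 0 0 b
  have h2 := coc_mul ω hc b 0 0
  simp only [add_zero, zero_add] at h1 h2
  have e1 : ω 0 b = ω 0 0 := (mul_left_cancel₀ (coc_ne ω hc 0 b) h1).symm
  have e2 : ω b 0 = ω 0 0 := mul_right_cancel₀ (coc_ne ω hc b 0) (by linear_combination h2)
  unfold bichar
  rw [e1, e2]
  exact mul_inv_cancel₀ (coc_ne ω hc 0 0)

lemma bichar_nsmul (a b : G) (n : ℕ) : bichar ω (n • a) b = (bichar ω a b) ^ n := by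
  induction n with
  | zero => simpa using bichar_zero ω hc b
  | succ m ih => rw [succ_nsmul, bichar_add ω hc, ih, pow_succ]

lemma bichar_antisym (a b : G) : bichar ω a b * bichar ω b a = 1 := by
  unfold bichar
  have h1 := coc_ne ω hc a b
  have h2 := coc_ne ω hc b a
  field_simp

lemma bichar_nsmul_right (a b : G) (n : ℕ) : bichar ω a (n • b) = (bichar ω a b) ^ n := by
  have hne : bichar ω (n • b) a ≠ 0 := by
    unfold bichar
    exact mul_ne_zero (coc_ne ω hc _ _) (inv_ne_zero (coc_ne ω hc _ _))
  have h1 := bichar_antisym ω hc a (n • b)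
  have h2 := bichar_antisym ω hc a b
  have h3 := bichar_nsmul ω hc b a n
  have hba : bichar ω b a ≠ 0 := by
    unfold bichar
    exact mul_ne_zero (coc_ne ω hc _ _) (inv_ne_zero (coc_ne ω hc _ _))
  have key : bichar ω a (n • b) = (bichar ω (n • b) a)⁻¹ := by
    field_simp
    linear_combination h1
  rw [key, h3, ← inv_pow]
  congr 1
  field_simp
  linear_combination -h2

end Bichar


/-- For `k ∈ {0, …, N−1}`, there exists a 2-cocycle `ω̂` on `ℤ/(NM) × ℤ/(NM)` with values in
nonzero complex numbers whose pullback along `ι` equals `ω_k^{(N)}` if and only if there is an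
integer `k'` with `k'M ≡ k (mod N)`. -/
theorem exists_cocycle_pullback_iff (N M : ℕ) [NeZero N] [NeZero M] (k : ℕ) (hk : k < N) :
    (∃ ωhat : ZMod (N * M) × ZMod (N * M) → ZMod (N * M) × ZMod (N * M) → ℂ,
      (∀ x y z : ZMod (N * M) × ZMod (N * M),
        ωhat y z * (ωhat (x + y) z)⁻¹ * ωhat x (y + z) * (ωhat x y)⁻¹ = 1) ∧
      (∀ x y : ZMod N × ZMod N,
        ωhat (iotaPair N M x) (iotaPair N M y) = omegaK N (k : ℤ) x y)) ↔
    ∃ k' : ℤ, k' * (M : ℤ) ≡ (k : ℤ) [ZMOD (N : ℤ)] := by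

  haveI : NeZero (N * M) := ⟨Nat.mul_ne_zero (NeZero.ne N) (NeZero.ne M)⟩
  have hNM0 : (N * M : ℕ) ≠ 0 := NeZero.ne _
  constructor
  · rintro ⟨ω, hc, hp⟩
    by_cases hN1 : N = 1
    · exact ⟨0, by subst hN1; exact Int.modEq_one⟩
    · have hN2 : 1 < N := lt_of_le_of_ne (Nat.one_le_iff_ne_zero.2 (NeZero.ne N)) (Ne.symm hN1)
      haveI : Fact (1 < N) := ⟨hN2⟩
      set e₁ : ZMod (N * M) × ZMod (N * M) := (1, 0) with he₁
      set e₂ : ZMod (N * M) × ZMod (N * M) := (0, 1) with he₂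
      have hz : (bichar ω e₁ e₂) ^ (N * M) = 1 := by
        rw [← bichar_nsmul ω hc]
        have h0 : (N * M) • e₁ = 0 := by
          ext
          · simp [he₁, nsmul_eq_mul, ZMod.natCast_self]
          · simp [he₁]
        rw [h0, bichar_zero ω hc]
      obtain ⟨t, htlt, ht⟩ :=
        (Complex.isPrimitiveRoot_exp (N * M) hNM0).eq_pow_of_pow_eq_one hz
      refine ⟨t, ?_⟩
      have hι1 : iotaPair N M (1, 0) = M • e₁ := by
        unfold iotaPair
        ext
        · simp [he₁, ZMod.val_one, nsmul_eq_mul]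
        · simp [he₁]
      have hι2 : iotaPair N M (0, 1) = M • e₂ := by
        unfold iotaPair
        ext
        · simp [he₂]
        · simp [he₂, ZMod.val_one, nsmul_eq_mul]
      have hval : bichar ω (iotaPair N M (1, 0)) (iotaPair N M (0, 1)) =
          Complex.exp (2 * (Real.pi : ℂ) * Complex.I * (k : ℂ) / N) := by
        unfold bichar
        rw [hp, hp]
        unfold omegaK
        simp [ZMod.val_one, ZMod.val_zero]
      have hpow : bichar ω (iotaPair N M (1, 0)) (iotaPair N M (0, 1)) =
          (bichar ω e₁ e₂) ^ (M * M) := by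
        rw [hι1, hι2, bichar_nsmul ω hc, bichar_nsmul_right ω hc, ← pow_mul]
      rw [hval, ← ht, ← pow_mul, ← Complex.exp_nat_mul] at hpow
      obtain ⟨n, hn⟩ := Complex.exp_eq_exp_iff_exists_int.1 hpow.symm
      have hπ : (Real.pi : ℂ) ≠ 0 := by
        exact_mod_cast Real.pi_ne_zero
      have hI : Complex.I ≠ 0 := Complex.I_ne_zero
      have hN : (N : ℂ) ≠ 0 := Nat.cast_ne_zero.2 (NeZero.ne N)
      have hM : (M : ℂ) ≠ 0 := Nat.cast_ne_zero.2 (NeZero.ne M)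
      have hkey : ((t : ℤ) * M : ℤ) = ((k : ℤ) + n * N : ℤ) := by
        have : ((t : ℂ) * M) = (k : ℂ) + n * N := by
          have hNMc : ((N * M : ℕ) : ℂ) ≠ 0 := Nat.cast_ne_zero.2 hNM0
          field_simp at hn
          have hcoef : (2 * (Real.pi : ℂ) * Complex.I * N * M) ≠ 0 :=
            mul_ne_zero (mul_ne_zero (mul_ne_zero (mul_ne_zero two_ne_zero hπ) hI) hN) hM
          apply mul_left_cancel₀ hcoef
          push_cast at hn
          linear_combination (2 * (Real.pi : ℂ) * Complex.I) * hn
        exact_mod_cast this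
      exact Int.ModEq.symm (Int.modEq_iff_dvd.2 ⟨n, by linarith⟩)
  · rintro ⟨k', hk'⟩
    obtain ⟨j, hj⟩ := Int.ModEq.dvd hk'
    exact ⟨omegaK (N * M) k', fun x y z => omegaK_cocycle (N * M) k' x y z,
      fun x y => omegaK_pullback N M k k' (-j) (by linarith) x y⟩
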